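/- Let μ = (μ(n))_{n≥0} be a probability sequence with μ(1) = 0 and 0 < μ(0) < 1, and let f(z) = Σ_n μ(n)z^n and h(z) = f(z) − μ(0). Define ν(0) = 1 − Σ_{n≥2} μ(n)(1−μ(0))^n, ν(1) = 0, and for k ≥ 2, ν(k) = Σ_{n≥2} μ(n) Σ_{i_1+⋯+i_n = k, each i_j ≥ 1} ∏_{j=1}^n μ(i_j). Then Σ_{k≥0} ν(k) = 1 (so ν is a probability sequence), and its generating function g(z) = Σ_k ν(k)z^k satisfies g(z) = ν(0) + h(h(z)) for all z ∈ [0,1]. -/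

import Mathlib

/-- The offspring sequence `ν` built from `μ` : `ν(0) = 1 − Σ_{n≥2} μ(n)(1−μ(0))^n`, `ν(1) = 0`,
and, for `k ≥ 2`, `ν(k) = Σ_{n≥2} μ(n) Σ_{i₁+⋯+iₙ=k, iⱼ≥1} ∏ⱼ μ(iⱼ)`. -/
noncomputable def nu (μ : ℕ → ℝ) : ℕ → ℝ
  | 0 => 1 - ∑' n : ℕ, (if 2 ≤ n then μ n * (1 - μ 0) ^ n else 0)
  | 1 => 0
  | (k + 2) => ∑' n : ℕ, (if 2 ≤ n then
      μ n * ∑ x ∈ (Finset.Nat.antidiagonalTuple n (k + 2)).filter (fun x => ∀ j, 1 ≤ x j),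
        ∏ j, μ (x j)
      else 0)

/-- The generating function `f(z) = Σ μ(n) zⁿ`. -/
noncomputable def genFun (μ : ℕ → ℝ) (z : ℝ) : ℝ := ∑' n : ℕ, μ n * z ^ n

open scoped ENNReal

lemma bgw_tsum_pi_prod (c : ℕ → ℝ≥0∞) : ∀ n : ℕ,
    ∑' x : Fin n → ℕ, ∏ j, c (x j) = (∑' m, c m) ^ n := by
  intro n
  induction n with
  | zero =>
      rw [tsum_eq_single (default : Fin 0 → ℕ)
        (fun b hb => absurd (Subsingleton.elim b default) hb)]
      simp
  | succ n ih =>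
      rw [← (Fin.consEquiv fun _ : Fin (n+1) => ℕ).tsum_eq]
      simp only [Fin.consEquiv_apply]
      rw [ENNReal.tsum_prod']
      simp only [Fin.prod_univ_succ, Fin.cons_zero, Fin.cons_succ]
      simp_rw [ENNReal.tsum_mul_left (a := c _), ih, ENNReal.tsum_mul_right]
      ring

lemma bgw_tsum_pi_group (n : ℕ) (f : (Fin n → ℕ) → ℝ≥0∞) :
    ∑' x : Fin n → ℕ, f x = ∑' k : ℕ, ∑ x ∈ Finset.Nat.antidiagonalTuple n k, f x := by
  rw [← (Finset.Nat.sigmaAntidiagonalTupleEquivTuple n).tsum_eq, ENNReal.tsum_sigma']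
  congr 1
  ext k
  exact Finset.tsum_subtype _ f

/-- The ENNReal version of `μ` with the `0`-th (and hence also `1`-st) term removed. -/
noncomputable def bgwA (μ : ℕ → ℝ) : ℕ → ℝ≥0∞ :=
  fun m => if m = 0 then 0 else ENNReal.ofReal (μ m)

/-- ENNReal coefficients of `h ∘ h`. -/
noncomputable def bgwE (μ : ℕ → ℝ) (k : ℕ) : ℝ≥0∞ :=
  ∑' n, bgwA μ n * ∑ x ∈ Finset.Nat.antidiagonalTuple n k, ∏ j, bgwA μ (x j)

lemma bgw_claim1 (μ : ℕ → ℝ) (u : ℝ≥0∞) :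
    ∑' n, bgwA μ n * (∑' m, bgwA μ m * u ^ m) ^ n = ∑' k, bgwE μ k * u ^ k := by
  have h1 : ∀ n : ℕ, (∑' m, bgwA μ m * u ^ m) ^ n
      = ∑' k : ℕ, (∑ x ∈ Finset.Nat.antidiagonalTuple n k, ∏ j, bgwA μ (x j)) * u ^ k := by
    intro n
    rw [← bgw_tsum_pi_prod (fun m => bgwA μ m * u ^ m) n,
      bgw_tsum_pi_group n (fun x => ∏ j, bgwA μ (x j) * u ^ (x j))]
    congr 1
    ext k
    rw [Finset.sum_mul]
    refine Finset.sum_congr rfl fun x hx => ?_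
    rw [Finset.prod_mul_distrib, Finset.prod_pow_eq_pow_sum,
      Finset.Nat.mem_antidiagonalTuple.mp hx]
  simp_rw [h1, ← ENNReal.tsum_mul_left]
  rw [ENNReal.tsum_comm]
  congr 1
  ext k
  unfold bgwE
  rw [← ENNReal.tsum_mul_right]
  congr 1
  ext n
  ring

lemma bgw_E_zero (μ : ℕ → ℝ) : bgwE μ 0 = 0 := by
  unfold bgwE
  rw [ENNReal.tsum_eq_zero]
  intro n
  match n with
  | 0 => simp [bgwA]
  | (m+1) =>
      rw [Finset.Nat.antidiagonalTuple_zero_right, Finset.sum_singleton]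
      have : ∏ j : Fin (m+1), bgwA μ ((0 : Fin (m+1) → ℕ) j) = 0 :=
        Finset.prod_eq_zero (Finset.mem_univ 0) (by simp [bgwA])
      rw [this, mul_zero]

lemma bgw_E_one (μ : ℕ → ℝ) (h1 : μ 1 = 0) : bgwE μ 1 = 0 := by
  unfold bgwE
  rw [ENNReal.tsum_eq_zero]
  intro n
  match n with
  | 0 => simp [bgwA]
  | 1 => simp [bgwA, h1]
  | (m+2) =>
      have : ∑ x ∈ Finset.Nat.antidiagonalTuple (m+2) 1, ∏ j, bgwA μ (x j) = 0 := by
        refine Finset.sum_eq_zero fun x hx => ?_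
        have hx1 : ∑ j, x j = 1 := Finset.Nat.mem_antidiagonalTuple.mp hx
        have : ∃ j, x j = 0 := by
          by_contra hc
          push_neg at hc
          have : ∀ j, 1 ≤ x j := fun j => Nat.one_le_iff_ne_zero.mpr (hc j)
          have h2 : (m + 2 : ℕ) ≤ ∑ j, x j := by
            calc (m + 2 : ℕ) = ∑ _j : Fin (m+2), 1 := by simp
            _ ≤ ∑ j, x j := Finset.sum_le_sum fun j _ => this j
          omega
        obtain ⟨j, hj⟩ := this
        exact Finset.prod_eq_zero (Finset.mem_univ j) (by simp [hj, bgwA])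
      rw [this, mul_zero]

lemma bgw_D (μ : ℕ → ℝ) (hnonneg : ∀ n, 0 ≤ μ n) (n k : ℕ) :
    ∑ x ∈ Finset.Nat.antidiagonalTuple n k, ∏ j, bgwA μ (x j)
      = ENNReal.ofReal (∑ x ∈ (Finset.Nat.antidiagonalTuple n k).filter (fun x => ∀ j, 1 ≤ x j),
          ∏ j, μ (x j)) := by
  have hfil : ∑ x ∈ (Finset.Nat.antidiagonalTuple n k).filter (fun x => ∀ j, 1 ≤ x j),
      ∏ j, bgwA μ (x j) = ∑ x ∈ Finset.Nat.antidiagonalTuple n k, ∏ j, bgwA μ (x j) := by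
    refine Finset.sum_filter_of_ne fun x _ hne j => ?_
    by_contra hj
    have hj0 : x j = 0 := by omega
    exact hne (Finset.prod_eq_zero (Finset.mem_univ j) (by simp [hj0, bgwA]))
  rw [← hfil, ENNReal.ofReal_sum_of_nonneg
      (fun x _ => Finset.prod_nonneg fun j _ => hnonneg (x j))]
  refine Finset.sum_congr rfl fun x hx => ?_
  have hx1 : ∀ j, 1 ≤ x j := (Finset.mem_filter.mp hx).2
  rw [ENNReal.ofReal_prod_of_nonneg (fun j _ => hnonneg (x j))]
  refine Finset.prod_congr rfl fun j _ => ?_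
  have : x j ≠ 0 := by have := hx1 j; omega
  simp [bgwA, this]

theorem stmt_3 (μ : ℕ → ℝ) (hnonneg : ∀ n, 0 ≤ μ n) (hsum : (∑' n : ℕ, μ n) = 1)
    (h1 : μ 1 = 0) (h00 : 0 < μ 0) (h01 : μ 0 < 1)
    (h : ℝ → ℝ) (hh : ∀ z, h z = genFun μ z - μ 0) :
    (∀ k, 0 ≤ nu μ k) ∧ (∑' k : ℕ, nu μ k) = 1 ∧
      ∀ z ∈ Set.Icc (0 : ℝ) 1, (∑' k : ℕ, nu μ k * z ^ k) = nu μ 0 + h (h z) := by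
  -- basic summability
  have hμsum : Summable μ := by
    by_contra hc
    rw [tsum_eq_zero_of_not_summable hc] at hsum
    norm_num at hsum
  set a : ℕ → ℝ := fun m => if m = 0 then 0 else μ m with ha_def
  have ha_nonneg : ∀ m, 0 ≤ a m := by
    intro m
    by_cases hm : m = 0
    · simp [ha_def, hm]
    · simp only [ha_def, hm, if_false]
      exact hnonneg m
  have ha_le : ∀ m, a m ≤ μ m := by
    intro m
    by_cases hm : m = 0
    · simp only [ha_def, hm, if_pos rfl]
      exact hnonneg 0
    · simp [ha_def, hm]
  have hA : ∀ m, bgwA μ m = ENNReal.ofReal (a m) := fun m => by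
    by_cases hm : m = 0 <;> simp [bgwA, ha_def, hm]
  -- sum of bgwA is at most 1
  have hofμ : ∑' m, ENNReal.ofReal (μ m) = 1 := by
    rw [← ENNReal.ofReal_tsum_of_nonneg hnonneg hμsum, hsum, ENNReal.ofReal_one]
  have hAle1 : ∑' m, bgwA μ m ≤ 1 := by
    rw [← hofμ]
    refine ENNReal.tsum_le_tsum fun m => ?_
    rw [hA m]
    exact ENNReal.ofReal_le_ofReal (ha_le m)
  -- all bgwE are at most 1
  have hEsum_le : ∑' k, bgwE μ k ≤ 1 := by
    have := bgw_claim1 μ 1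
    simp only [one_pow, mul_one] at this
    rw [← this]
    calc ∑' n, bgwA μ n * (∑' m, bgwA μ m) ^ n
        ≤ ∑' n, bgwA μ n * 1 := by
          refine ENNReal.tsum_le_tsum fun n => ?_
          exact mul_le_mul_right (pow_le_one' hAle1 n) _
      _ ≤ 1 := by simpa using hAle1
  have hE_le1 : ∀ k, bgwE μ k ≤ 1 := fun k =>
    le_trans (ENNReal.le_tsum k) hEsum_le
  have hE_ne_top : ∀ k, bgwE μ k ≠ ⊤ := fun k =>
    ne_top_of_le_ne_top ENNReal.one_ne_top (hE_le1 k)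
  -- nonnegativity of nu
  have hift : ∀ n : ℕ, (0:ℝ) ≤ (if 2 ≤ n then μ n * (1 - μ 0) ^ n else 0) ∧
      (if 2 ≤ n then μ n * (1 - μ 0) ^ n else 0) ≤ μ n := by
    intro n
    have h1μ0 : (0:ℝ) ≤ 1 - μ 0 := by linarith
    have h1μ1 : (1:ℝ) - μ 0 ≤ 1 := by linarith
    by_cases hn : 2 ≤ n
    · simp only [hn, if_true]
      constructor
      · exact mul_nonneg (hnonneg n) (pow_nonneg h1μ0 n)
      · exact mul_le_of_le_one_right (hnonneg n) (pow_le_one₀ h1μ0 h1μ1)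
    · simp [hn, hnonneg n]
  have hif_summable : Summable (fun n => if 2 ≤ n then μ n * (1 - μ 0) ^ n else 0) :=
    hμsum.of_nonneg_of_le (fun n => (hift n).1) (fun n => (hift n).2)
  have hnu0 : nu μ 0 = 1 - ∑' n : ℕ, (if 2 ≤ n then μ n * (1 - μ 0) ^ n else 0) := rfl
  have hnu_nonneg : ∀ k, 0 ≤ nu μ k := by
    intro k
    match k with
    | 0 =>
        rw [hnu0]
        have : ∑' n : ℕ, (if 2 ≤ n then μ n * (1 - μ 0) ^ n else 0) ≤ ∑' n, μ n :=
          Summable.tsum_le_tsum (fun n => (hift n).2) hif_summable hμsum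
        rw [hsum] at this
        linarith
    | 1 => exact le_of_eq rfl
    | (k+2) =>
        refine tsum_nonneg fun n => ?_
        by_cases hn : 2 ≤ n
        · simp only [hn, if_true]
          exact mul_nonneg (hnonneg n)
            (Finset.sum_nonneg fun x _ => Finset.prod_nonneg fun j _ => hnonneg (x j))
        · simp [hn]
  -- E (k+1) = ofReal (nu (k+1))
  have hE_succ : ∀ k : ℕ, bgwE μ (k+1) = ENNReal.ofReal (nu μ (k+1)) := by
    intro k
    match k with
    | 0 => rw [bgw_E_one μ h1]; norm_num [nu]
    | (k+1) =>
        have hterm : ∀ n : ℕ, bgwA μ n *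
            ∑ x ∈ Finset.Nat.antidiagonalTuple n (k+2), ∏ j, bgwA μ (x j)
            = ENNReal.ofReal (if 2 ≤ n then
                μ n * ∑ x ∈ (Finset.Nat.antidiagonalTuple n (k + 2)).filter
                  (fun x => ∀ j, 1 ≤ x j), ∏ j, μ (x j) else 0) := by
          intro n
          rw [bgw_D μ hnonneg]
          match n with
          | 0 => simp [bgwA]
          | 1 => simp [bgwA, h1]
          | (m+2) =>
              have h2 : 2 ≤ m + 2 := by omega
              simp only [h2, if_true]
              have hb : bgwA μ (m+2) = ENNReal.ofReal (μ (m+2)) := by simp [bgwA]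
              rw [hb, ← ENNReal.ofReal_mul (hnonneg (m+2))]
        have hg_nonneg : ∀ n : ℕ, (0:ℝ) ≤ (if 2 ≤ n then
            μ n * ∑ x ∈ (Finset.Nat.antidiagonalTuple n (k + 2)).filter
              (fun x => ∀ j, 1 ≤ x j), ∏ j, μ (x j) else 0) := by
          intro n
          by_cases hn : 2 ≤ n
          · simp only [hn, if_true]
            exact mul_nonneg (hnonneg n)
              (Finset.sum_nonneg fun x _ => Finset.prod_nonneg fun j _ => hnonneg (x j))
          · simp [hn]
        have hEk : bgwE μ (k+2) = ∑' n, ENNReal.ofReal (if 2 ≤ n then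
            μ n * ∑ x ∈ (Finset.Nat.antidiagonalTuple n (k + 2)).filter
              (fun x => ∀ j, 1 ≤ x j), ∏ j, μ (x j) else 0) := by
          unfold bgwE
          exact tsum_congr hterm
        have hg_summable : Summable (fun n : ℕ => (if 2 ≤ n then
            μ n * ∑ x ∈ (Finset.Nat.antidiagonalTuple n (k + 2)).filter
              (fun x => ∀ j, 1 ≤ x j), ∏ j, μ (x j) else 0)) := by
          have := ENNReal.summable_toReal (by rw [← hEk]; exact hE_ne_top (k+2))
          refine this.congr fun n => ?_
          rw [ENNReal.toReal_ofReal (hg_nonneg n)]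
        rw [hEk, ← ENNReal.ofReal_tsum_of_nonneg hg_nonneg hg_summable]
        rfl
  -- generating function facts
  have hsummable_t : ∀ t : ℝ, t ∈ Set.Icc (0:ℝ) 1 → Summable (fun m => a m * t ^ m) := by
    intro t ⟨ht0, ht1⟩
    refine hμsum.of_nonneg_of_le
      (fun m => mul_nonneg (ha_nonneg m) (pow_nonneg ht0 m)) (fun m => ?_)
    calc a m * t ^ m ≤ a m * 1 :=
          mul_le_mul_of_nonneg_left (pow_le_one₀ ht0 ht1) (ha_nonneg m)
      _ ≤ μ m := by rw [mul_one]; exact ha_le m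
  have hsummable_μt : ∀ t : ℝ, t ∈ Set.Icc (0:ℝ) 1 → Summable (fun m => μ m * t ^ m) := by
    intro t ⟨ht0, ht1⟩
    refine hμsum.of_nonneg_of_le
      (fun m => mul_nonneg (hnonneg m) (pow_nonneg ht0 m)) (fun m => ?_)
    calc μ m * t ^ m ≤ μ m * 1 :=
          mul_le_mul_of_nonneg_left (pow_le_one₀ ht0 ht1) (hnonneg m)
      _ = μ m := mul_one _
  have hht : ∀ t : ℝ, t ∈ Set.Icc (0:ℝ) 1 → h t = ∑' m, a m * t ^ m := by
    intro t ht
    rw [hh t]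
    unfold genFun
    have hsplit : ∀ m : ℕ, μ m * t ^ m = a m * t ^ m + (if m = 0 then μ 0 else 0) := by
      intro m
      by_cases hm : m = 0 <;> simp [ha_def, hm]
    rw [tsum_congr hsplit, Summable.tsum_add (hsummable_t t ht)
      (summable_of_ne_finset_zero (s := {0}) (fun m hm => by
        simp only [Finset.mem_singleton] at hm; simp [hm])),
      tsum_ite_eq (0:ℕ) (fun _ => μ 0)]
    ring
  have hh_mem : ∀ t : ℝ, t ∈ Set.Icc (0:ℝ) 1 → h t ∈ Set.Icc (0:ℝ) 1 := by
    intro t ht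
    rw [hht t ht]
    constructor
    · exact tsum_nonneg fun m => mul_nonneg (ha_nonneg m) (pow_nonneg ht.1 m)
    · have : ∑' m, a m * t ^ m ≤ ∑' m, μ m := by
        refine Summable.tsum_le_tsum (fun m => ?_) (hsummable_t t ht) hμsum
        calc a m * t ^ m ≤ a m * 1 :=
              mul_le_mul_of_nonneg_left (pow_le_one₀ ht.1 ht.2) (ha_nonneg m)
          _ ≤ μ m := by rw [mul_one]; exact ha_le m
      rw [hsum] at this
      exact this
  have hofReal_h : ∀ t : ℝ, t ∈ Set.Icc (0:ℝ) 1 →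
      ENNReal.ofReal (h t) = ∑' m, bgwA μ m * (ENNReal.ofReal t) ^ m := by
    intro t ht
    rw [hht t ht, ENNReal.ofReal_tsum_of_nonneg
      (fun m => mul_nonneg (ha_nonneg m) (pow_nonneg ht.1 m)) (hsummable_t t ht)]
    refine tsum_congr fun m => ?_
    rw [ENNReal.ofReal_mul (ha_nonneg m), ENNReal.ofReal_pow ht.1, hA m]
  -- the main identity
  have main : ∀ t ∈ Set.Icc (0:ℝ) 1, (∑' k : ℕ, nu μ k * t ^ k) = nu μ 0 + h (h t) := by
    intro t ht
    have hs := hh_mem t ht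
    set s : ℝ := h t with hs_def
    -- ENNReal computation
    have key : ENNReal.ofReal (h s)
        = ∑' k : ℕ, bgwE μ (k+1) * (ENNReal.ofReal t) ^ (k+1) := by
      rw [hofReal_h s hs, hs_def, hofReal_h t ht, bgw_claim1 μ (ENNReal.ofReal t),
        tsum_eq_zero_add' ENNReal.summable, bgw_E_zero μ]
      simp
    -- real shifted family
    have hofF : ∀ k : ℕ, ENNReal.ofReal (nu μ (k+1) * t ^ (k+1))
        = bgwE μ (k+1) * (ENNReal.ofReal t) ^ (k+1) := by
      intro k
      rw [ENNReal.ofReal_mul (hnu_nonneg (k+1)), ENNReal.ofReal_pow ht.1, hE_succ k]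
    have hFsum_ne_top : (∑' k : ℕ, ENNReal.ofReal (nu μ (k+1) * t ^ (k+1))) ≠ ⊤ := by
      rw [tsum_congr hofF, ← key]
      exact ENNReal.ofReal_ne_top
    have hF_summable : Summable (fun k : ℕ => nu μ (k+1) * t ^ (k+1)) := by
      have := ENNReal.summable_toReal hFsum_ne_top
      refine this.congr fun k => ?_
      rw [ENNReal.toReal_ofReal (mul_nonneg (hnu_nonneg (k+1)) (pow_nonneg ht.1 (k+1)))]
    have hFval : (∑' k : ℕ, nu μ (k+1) * t ^ (k+1)) = h s := by
      have h1' : ENNReal.ofReal (∑' k : ℕ, nu μ (k+1) * t ^ (k+1)) = ENNReal.ofReal (h s) := by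
        rw [ENNReal.ofReal_tsum_of_nonneg
          (fun k => mul_nonneg (hnu_nonneg (k+1)) (pow_nonneg ht.1 (k+1))) hF_summable]
        rw [key]
        exact tsum_congr hofF
      have hnn1 : (0:ℝ) ≤ ∑' k : ℕ, nu μ (k+1) * t ^ (k+1) :=
        tsum_nonneg fun k => mul_nonneg (hnu_nonneg (k+1)) (pow_nonneg ht.1 (k+1))
      exact (ENNReal.ofReal_eq_ofReal_iff hnn1 (hh_mem s hs).1).mp h1'
    have hfull : Summable (fun k : ℕ => nu μ k * t ^ k) :=
      (summable_nat_add_iff 1).mp hF_summable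
    rw [Summable.tsum_eq_zero_add hfull]
    simp only [pow_zero, mul_one]
    rw [hFval]
  refine ⟨hnu_nonneg, ?_, main⟩
  -- total mass 1 : use the identity at t = 1
  have h1mem : (1:ℝ) ∈ Set.Icc (0:ℝ) 1 := by constructor <;> norm_num
  have := main 1 h1mem
  simp only [one_pow, mul_one] at this
  rw [this]
  -- compute h (h 1)
  have hgen1 : genFun μ 1 = 1 := by
    unfold genFun; simp [hsum]
  have hh1 : h 1 = 1 - μ 0 := by rw [hh 1, hgen1]
  have hmem1 : (1:ℝ) - μ 0 ∈ Set.Icc (0:ℝ) 1 := by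
    constructor <;> [linarith; linarith]
  have hhh1 : h (h 1) = ∑' n : ℕ, (if 2 ≤ n then μ n * (1 - μ 0) ^ n else 0) := by
    rw [hh1, hht (1 - μ 0) hmem1]
    refine tsum_congr fun n => ?_
    match n with
    | 0 => simp [ha_def]
    | 1 => simp [ha_def, h1]
    | (m+2) => simp [ha_def, show 2 ≤ m + 2 by omega]
  rw [hhh1, hnu0]
  ring
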